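/- Let K be the middle-third Cantor set. Let I = [a, a+3t] and J = [b, b+3t] be disjoint closed intervals in [2/3, 1] with t > 0, and let A_I, A_J : [0,1] → I, J be the orientation-preserving affine bijections. Then {xy : x ∈ A_I(K), y ∈ A_J(K)} = {xy : x ∈ I, y ∈ J}. -/

import Mathlib

open Set Filter

noncomputable def cantorK : Set ℝ :=
  {x | ∃ α : ℕ → ℝ, (∀ k, α k = 0 ∨ α k = 2) ∧ x = ∑' k : ℕ, α k / 3 ^ (k + 1)}

def Pset (E F : Set ℝ) : Set ℝ := Set.image2 (· * ·) E F

lemma geo_summable : Summable (fun k : ℕ => (2:ℝ)/3^(k+1)) := by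
  have h : (fun k : ℕ => (2:ℝ)/3^(k+1)) = fun k => (2/3) * (1/3:ℝ)^k := by
    funext k; rw [pow_succ]; simp only [one_div, inv_pow]; ring
  rw [h]
  exact (summable_geometric_of_lt_one (by norm_num) (by norm_num)).mul_left _

lemma geo_tsum : ∑' k : ℕ, (2:ℝ)/3^(k+1) = 1 := by
  have h : (fun k : ℕ => (2:ℝ)/3^(k+1)) = fun k => (2/3) * (1/3:ℝ)^k := by
    funext k; rw [pow_succ]; simp only [one_div, inv_pow]; ring
  rw [h, tsum_mul_left, tsum_geometric_of_lt_one (by norm_num) (by norm_num)]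
  norm_num

lemma cantor_term_nonneg {α : ℕ → ℝ} (hα : ∀ k, α k = 0 ∨ α k = 2) (k : ℕ) :
    0 ≤ α k / 3^(k+1) := by
  rcases hα k with h | h <;> rw [h] <;> positivity

lemma cantor_term_le {α : ℕ → ℝ} (hα : ∀ k, α k = 0 ∨ α k = 2) (k : ℕ) :
    α k / 3^(k+1) ≤ 2/3^(k+1) := by
  have h2 : α k ≤ 2 := by rcases hα k with h | h <;> norm_num [h]
  gcongr

lemma cantor_summable {α : ℕ → ℝ} (hα : ∀ k, α k = 0 ∨ α k = 2) :
    Summable (fun k => α k / 3^(k+1)) :=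
  Summable.of_nonneg_of_le (cantor_term_nonneg hα) (cantor_term_le hα) geo_summable

lemma cantor_subset : cantorK ⊆ Icc 0 1 := by
  rintro x ⟨α, hα, rfl⟩
  constructor
  · exact tsum_nonneg (cantor_term_nonneg hα)
  · calc ∑' k, α k / 3^(k+1) ≤ ∑' k : ℕ, (2:ℝ)/3^(k+1) :=
      Summable.tsum_le_tsum (cantor_term_le hα) (cantor_summable hα) geo_summable
    _ = 1 := geo_tsum

noncomputable def St (a b t c : ℝ) : ℕ → ℝ × ℝ
  | 0 => (0, 0)
  | n+1 =>
    if c ≤ (a + 3*t*(St a b t c n).1 + t*(1/3:ℝ)^n) * (b + 3*t*(St a b t c n).2 + t*(1/3:ℝ)^n) then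
      St a b t c n
    else if c ≤ (a + 3*t*(St a b t c n).1 + t*(1/3:ℝ)^n) * (b + 3*t*(St a b t c n).2 + 3*(t*(1/3:ℝ)^n)) then
      ((St a b t c n).1, (St a b t c n).2 + 2*(1/3:ℝ)^(n+1))
    else if c ≤ (a + 3*t*(St a b t c n).1 + 3*(t*(1/3:ℝ)^n)) * (b + 3*t*(St a b t c n).2 + t*(1/3:ℝ)^n) then
      ((St a b t c n).1 + 2*(1/3:ℝ)^(n+1), (St a b t c n).2)
    else ((St a b t c n).1 + 2*(1/3:ℝ)^(n+1), (St a b t c n).2 + 2*(1/3:ℝ)^(n+1))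

set_option maxHeartbeats 1000000 in
lemma St_inv (a b t c : ℝ) (ht : 0 < t) (ha : 2/3 ≤ a) (ha1 : a + 3*t ≤ 1)
    (hb : 2/3 ≤ b) (hb1 : b + 3*t ≤ 1) (hab : a + 3*t < b)
    (hc1 : a*b ≤ c) (hc2 : c ≤ (a+3*t)*(b+3*t)) (n : ℕ) :
    0 ≤ (St a b t c n).1 ∧ 0 ≤ (St a b t c n).2 ∧
    (St a b t c n).1 + (1/3:ℝ)^n ≤ 1 ∧ (St a b t c n).2 + (1/3:ℝ)^n ≤ 1 ∧
    3*(t*(1/3:ℝ)^n) < (b + 3*t*(St a b t c n).2) - (a + 3*t*(St a b t c n).1) ∧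
    (a + 3*t*(St a b t c n).1) * (b + 3*t*(St a b t c n).2) ≤ c ∧
    c ≤ (a + 3*t*(St a b t c n).1 + 3*(t*(1/3:ℝ)^n)) * (b + 3*t*(St a b t c n).2 + 3*(t*(1/3:ℝ)^n)) := by
  induction n with
  | zero =>
    simp only [St, pow_zero]
    norm_num
    exact ⟨by linarith, hc1, by nlinarith⟩
  | succ n ih =>
    obtain ⟨h1, h2, h3, h4, h5, h6, h7⟩ := ih
    have hp : (0:ℝ) < (1/3:ℝ)^n := by positivity
    have hE : (0:ℝ) < t*(1/3:ℝ)^n := by positivity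
    have hp1 : (1/3:ℝ)^n ≤ 1 := by
      apply pow_le_one₀ <;> norm_num
    have hA2 : 2/3 ≤ a + 3*t*(St a b t c n).1 := by nlinarith [mul_nonneg ht.le h1]
    have hB2 : 2/3 ≤ b + 3*t*(St a b t c n).2 := by nlinarith [mul_nonneg ht.le h2]
    have hA1 : a + 3*t*(St a b t c n).1 + 3*(t*(1/3:ℝ)^n) ≤ 1 := by
      nlinarith [mul_le_mul_of_nonneg_left h3 ht.le]
    have hB1 : b + 3*t*(St a b t c n).2 + 3*(t*(1/3:ℝ)^n) ≤ 1 := by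
      nlinarith [mul_le_mul_of_nonneg_left h4 ht.le]
    have hgap : 0 ≤ (b + 3*t*(St a b t c n).2) - (a + 3*t*(St a b t c n).1) - t*(1/3:ℝ)^n := by
      linarith
    have h3AB : 0 ≤ 3*(a + 3*t*(St a b t c n).1) - (b + 3*t*(St a b t c n).2) := by linarith
    rw [St]
    split_ifs with hg1 hg2 hg3
    · refine ⟨h1, h2, ?_, ?_, ?_, h6, ?_⟩
      · rw [pow_succ]; linarith
      · rw [pow_succ]; linarith
      · rw [pow_succ]; linarith
      · rw [pow_succ]; linarith [hg1]
    · push_neg at hg1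
      refine ⟨h1, ?_, ?_, ?_, ?_, ?_, ?_⟩ <;> dsimp only <;> rw [pow_succ]
      · linarith
      · linarith
      · linarith
      · linarith
      · nlinarith [hg1, mul_nonneg hE.le (by linarith :
          (0:ℝ) ≤ (b + 3*t*(St a b t c n).2) - (a + 3*t*(St a b t c n).1)),
          sq_nonneg (t*(1/3:ℝ)^n)]
      · linarith [hg2]
    · push_neg at hg2
      refine ⟨?_, h2, ?_, ?_, ?_, ?_, ?_⟩ <;> dsimp only <;> rw [pow_succ]
      · linarith
      · linarith
      · linarith
      · linarith
      · nlinarith [hg2, mul_nonneg hE.le h3AB, sq_nonneg (t*(1/3:ℝ)^n)]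
      · linarith [hg3]
    · push_neg at hg3
      refine ⟨?_, ?_, ?_, ?_, ?_, ?_, ?_⟩ <;> dsimp only <;> rw [pow_succ]
      · linarith
      · linarith
      · linarith
      · linarith
      · linarith
      · nlinarith [hg3, mul_nonneg hE.le hgap]
      · linarith [h7]

lemma St_step (a b t c : ℝ) (n : ℕ) :
    ((St a b t c (n+1)).1 = (St a b t c n).1 ∨
      (St a b t c (n+1)).1 = (St a b t c n).1 + 2*(1/3:ℝ)^(n+1)) ∧
    ((St a b t c (n+1)).2 = (St a b t c n).2 ∨
      (St a b t c (n+1)).2 = (St a b t c n).2 + 2*(1/3:ℝ)^(n+1)) := by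
  rw [St]
  split_ifs <;> simp

set_option maxHeartbeats 1000000 in
lemma digit_lim (s : ℕ → ℝ) (h0 : s 0 = 0)
    (hstep : ∀ k, s (k+1) = s k ∨ s (k+1) = s k + 2*(1/3:ℝ)^(k+1)) :
    ∃ X ∈ cantorK, ∀ n, s n ≤ X ∧ X ≤ s n + (1/3:ℝ)^n := by
  set α : ℕ → ℝ := fun k => (s (k+1) - s k) * 3^(k+1) with hαdef
  have hα : ∀ k, α k = 0 ∨ α k = 2 := by
    intro k; rcases hstep k with h | h
    · left; simp [hαdef, h]
    · right
      have h3 : (3:ℝ)^(k+1) ≠ 0 := by positivity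
      simp only [hαdef, h]
      field_simp
      rw [add_sub_cancel_left, mul_assoc, ← mul_pow]; norm_num
  have hdiv : ∀ k, α k / 3^(k+1) = s (k+1) - s k := by
    intro k
    have h3 : (3:ℝ)^(k+1) ≠ 0 := by positivity
    show (s (k+1) - s k) * 3^(k+1) / 3^(k+1) = _; exact mul_div_cancel_right₀ _ h3
  have hsum := cantor_summable hα
  refine ⟨∑' k, α k / 3^(k+1), ⟨α, hα, rfl⟩, fun n => ?_⟩
  have hpart : ∑ k ∈ Finset.range n, α k / 3^(k+1) = s n := by
    simp only [hdiv]
    rw [Finset.sum_range_sub, h0, sub_zero]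
  have hsplit := Summable.sum_add_tsum_nat_add n hsum
  rw [hpart] at hsplit
  have htail0 : 0 ≤ ∑' k, α (k+n) / 3^(k+n+1) :=
    tsum_nonneg (fun k => cantor_term_nonneg hα (k+n))
  have htail1 : ∑' k, α (k+n) / 3^(k+n+1) ≤ (1/3:ℝ)^n := by
    have hle : ∀ k, α (k+n)/3^(k+n+1) ≤ (1/3:ℝ)^n * (2/3^(k+1)) := by
      intro k
      have he : (1/3:ℝ)^n * (2/3^(k+1)) = 2/3^(k+n+1) := by
        rw [one_div_pow]
        rw [div_mul_div_comm, one_mul, ← pow_add]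
        ring_nf
      rw [he]
      exact cantor_term_le hα (k+n)
    calc ∑' k, α (k+n)/3^(k+n+1) ≤ ∑' k : ℕ, (1/3:ℝ)^n * (2/3^(k+1)) :=
        Summable.tsum_le_tsum hle ((summable_nat_add_iff n).2 hsum) (geo_summable.mul_left _)
      _ = (1/3:ℝ)^n := by rw [tsum_mul_left, geo_tsum, mul_one]
  constructor
  · linarith
  · linarith

set_option maxHeartbeats 1000000 in
lemma exists_prod (a b t c : ℝ) (ht : 0 < t) (ha : 2/3 ≤ a) (ha1 : a + 3*t ≤ 1)
    (hb : 2/3 ≤ b) (hb1 : b + 3*t ≤ 1) (hab : a + 3*t < b)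
    (hc1 : a*b ≤ c) (hc2 : c ≤ (a+3*t)*(b+3*t)) :
    ∃ X ∈ cantorK, ∃ Y ∈ cantorK, (a + 3*t*X) * (b + 3*t*Y) = c := by
  obtain ⟨X, hX, hXb⟩ := digit_lim (fun n => (St a b t c n).1) (by simp [St])
      (fun k => (St_step a b t c k).1)
  obtain ⟨Y, hY, hYb⟩ := digit_lim (fun n => (St a b t c n).2) (by simp [St])
      (fun k => (St_step a b t c k).2)
  refine ⟨X, hX, Y, hY, ?_⟩
  have key : ∀ n : ℕ, |(a+3*t*X)*(b+3*t*Y) - c| ≤ 2*(1/3:ℝ)^n := by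
    intro n
    obtain ⟨i1,i2,i3,i4,i5,i6,i7⟩ := St_inv a b t c ht ha ha1 hb hb1 hab hc1 hc2 n
    have hX1 : (St a b t c n).1 ≤ X := (hXb n).1
    have hX2 : X ≤ (St a b t c n).1 + (1/3:ℝ)^n := (hXb n).2
    have hY1 : (St a b t c n).2 ≤ Y := (hYb n).1
    have hY2 : Y ≤ (St a b t c n).2 + (1/3:ℝ)^n := (hYb n).2
    have hp : (0:ℝ) < (1/3:ℝ)^n := by positivity
    have hp1 : (1/3:ℝ)^n ≤ 1 := pow_le_one₀ (by norm_num) (by norm_num)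
    have ht9 : 3*t ≤ 1/3 := by linarith
    have hA2 : 2/3 ≤ a + 3*t*(St a b t c n).1 := by nlinarith [mul_nonneg ht.le i1]
    have hB2 : 2/3 ≤ b + 3*t*(St a b t c n).2 := by nlinarith [mul_nonneg ht.le i2]
    have hA1 : a + 3*t*(St a b t c n).1 + 3*(t*(1/3:ℝ)^n) ≤ 1 := by
      nlinarith [mul_le_mul_of_nonneg_left i3 ht.le]
    have hB1 : b + 3*t*(St a b t c n).2 + 3*(t*(1/3:ℝ)^n) ≤ 1 := by
      nlinarith [mul_le_mul_of_nonneg_left i4 ht.le]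
    have hx1 : a + 3*t*(St a b t c n).1 ≤ a + 3*t*X := by
      have := mul_le_mul_of_nonneg_left hX1 ht.le; linarith
    have hx2 : a + 3*t*X ≤ a + 3*t*(St a b t c n).1 + 3*(t*(1/3:ℝ)^n) := by
      have := mul_le_mul_of_nonneg_left hX2 ht.le; nlinarith
    have hy1 : b + 3*t*(St a b t c n).2 ≤ b + 3*t*Y := by
      have := mul_le_mul_of_nonneg_left hY1 ht.le; linarith
    have hy2 : b + 3*t*Y ≤ b + 3*t*(St a b t c n).2 + 3*(t*(1/3:ℝ)^n) := by
      have := mul_le_mul_of_nonneg_left hY2 ht.le; nlinarith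
    have hx0 : 0 ≤ a + 3*t*X := by linarith
    have hy0 : 0 ≤ b + 3*t*Y := by linarith
    have hxy1 : (a + 3*t*(St a b t c n).1) * (b + 3*t*(St a b t c n).2)
        ≤ (a+3*t*X)*(b+3*t*Y) :=
      mul_le_mul hx1 hy1 (by linarith) hx0
    have hxy2 : (a+3*t*X)*(b+3*t*Y)
        ≤ (a + 3*t*(St a b t c n).1 + 3*(t*(1/3:ℝ)^n)) * (b + 3*t*(St a b t c n).2 + 3*(t*(1/3:ℝ)^n)) :=
      mul_le_mul hx2 hy2 hy0 (by linarith)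
    have hw : (a + 3*t*(St a b t c n).1 + 3*(t*(1/3:ℝ)^n)) * (b + 3*t*(St a b t c n).2 + 3*(t*(1/3:ℝ)^n))
        - (a + 3*t*(St a b t c n).1) * (b + 3*t*(St a b t c n).2) ≤ 2*(1/3:ℝ)^n := by
      nlinarith [mul_pos ht hp, sq_nonneg (t*(1/3:ℝ)^n),
        mul_nonneg (mul_nonneg ht.le hp.le)
          (by linarith : (0:ℝ) ≤ 2 - (a + 3*t*(St a b t c n).1) - (b + 3*t*(St a b t c n).2)),
        mul_le_mul_of_nonneg_left hp1 (mul_nonneg ht.le hp.le)]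
    rw [abs_le]
    constructor <;> linarith
  have hT : Tendsto (fun n : ℕ => 2*(1/3:ℝ)^n) atTop (nhds 0) := by
    have h := tendsto_pow_atTop_nhds_zero_of_lt_one (by norm_num : (0:ℝ) ≤ 1/3) (by norm_num)
    simpa using h.const_mul 2
  have h0 : |(a+3*t*X)*(b+3*t*Y) - c| ≤ 0 :=
    le_of_tendsto_of_tendsto' tendsto_const_nhds hT key
  have := abs_nonpos_iff.mp h0
  linarith [this]

lemma key (a b t : ℝ) (ht : 0 < t) (ha : 2/3 ≤ a) (ha1 : a + 3*t ≤ 1)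
    (hb : 2/3 ≤ b) (hb1 : b + 3*t ≤ 1) (hab : a + 3*t < b) :
    Pset ((fun x : ℝ => a + 3*t*x) '' cantorK) ((fun x : ℝ => b + 3*t*x) '' cantorK)
      = Pset (Icc a (a + 3*t)) (Icc b (b + 3*t)) := by
  ext c
  constructor
  · rintro ⟨x, ⟨X, hX, rfl⟩, y, ⟨Y, hY, rfl⟩, rfl⟩
    obtain ⟨hX0, hX1⟩ := cantor_subset hX
    obtain ⟨hY0, hY1⟩ := cantor_subset hY
    refine mem_image2_of_mem ⟨?_, ?_⟩ ⟨?_, ?_⟩ <;> simp only [] <;> nlinarith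
  · rintro ⟨x, hx, y, hy, rfl⟩
    obtain ⟨hx1, hx2⟩ := hx
    obtain ⟨hy1, hy2⟩ := hy
    have hc1 : a*b ≤ x*y := by nlinarith
    have hc2 : x*y ≤ (a+3*t)*(b+3*t) := by nlinarith
    obtain ⟨X, hX, Y, hY, hEq⟩ := exists_prod a b t (x*y) ht ha ha1 hb hb1 hab hc1 hc2
    exact ⟨a + 3*t*X, mem_image_of_mem _ hX, b + 3*t*Y, mem_image_of_mem _ hY, hEq⟩

lemma Pset_comm (E F : Set ℝ) : Pset E F = Pset F E := by
  unfold Pset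
  rw [Set.image2_swap]
  simp_rw [mul_comm]

theorem stmt4 (a b t : ℝ) (ht : 0 < t)
    (hI : Icc a (a + 3*t) ⊆ Icc (2/3) 1) (hJ : Icc b (b + 3*t) ⊆ Icc (2/3) 1)
    (hdisj : Disjoint (Icc a (a + 3*t)) (Icc b (b + 3*t))) :
    Pset ((fun x : ℝ => a + 3*t*x) '' cantorK) ((fun x : ℝ => b + 3*t*x) '' cantorK)
      = Pset (Icc a (a + 3*t)) (Icc b (b + 3*t)) := by
  have haI : a ∈ Icc a (a + 3*t) := ⟨le_refl a, by linarith⟩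
  have haI' : a + 3*t ∈ Icc a (a + 3*t) := ⟨by linarith, le_refl _⟩
  have ha : 2/3 ≤ a := (hI haI).1
  have ha1 : a + 3*t ≤ 1 := (hI haI').2
  have hbJ : b ∈ Icc b (b + 3*t) := ⟨le_refl b, by linarith⟩
  have hbJ' : b + 3*t ∈ Icc b (b + 3*t) := ⟨by linarith, le_refl _⟩
  have hb : 2/3 ≤ b := (hJ hbJ).1
  have hb1 : b + 3*t ≤ 1 := (hJ hbJ').2
  have hcase : a + 3*t < b ∨ b + 3*t < a := by
    by_contra h
    push_neg at h
    obtain ⟨h1, h2⟩ := h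
    exact Set.disjoint_left.mp hdisj
      (⟨le_max_left a b, max_le (by linarith) h1⟩ : max a b ∈ Icc a (a + 3*t))
      ⟨le_max_right a b, max_le h2 (by linarith)⟩
  rcases hcase with hab | hab
  · exact key a b t ht ha ha1 hb hb1 hab
  · rw [Pset_comm, Pset_comm (Icc a _)]
    exact key b a t ht hb hb1 ha ha1 hab
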